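/- Let $(R,\mathfrak{m})$ be a one-dimensional Cohen-Macaulay local ring, not a DVR, which is almost Gorenstein via an exact sequence $0 \to A \xrightarrow{\varphi} \mathrm{K}_A \to C \to 0$ with $\mathfrak{m}C = 0$. Then $\varphi(1) \notin \mathfrak{m}\mathrm{K}_A$. -/

import Mathlib

open IsLocalRing TrivSqZeroExt Filter

section Preamble

/-- For an `S`-algebra `A`, the dual `Hom_S(A, S)` is an `A`-module via
`(a • f) b = f (a * b)`. -/
instance dualSMul {S A : Type*} [CommRing S] [CommRing A] [Algebra S A] :
    SMul A (A →ₗ[S] S) :=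
  ⟨fun a f => f ∘ₗ LinearMap.mul S A a⟩

instance dualModule {S A : Type*} [CommRing S] [CommRing A] [Algebra S A] :
    Module A (A →ₗ[S] S) where
  smul := (· • ·)
  one_smul f := by ext x; simp [HSMul.hSMul, SMul.smul]
  mul_smul a b f := by ext x; simp [HSMul.hSMul, SMul.smul, mul_assoc, mul_left_comm]
  smul_zero a := rfl
  smul_add a f g := rfl
  add_smul a b f := by ext x; simp [HSMul.hSMul, SMul.smul, add_mul]
  zero_smul f := by ext x; simp [HSMul.hSMul, SMul.smul]

/-- The minimal number of generators of a module. -/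
noncomputable def minGens (A : Type*) [Semiring A] (M : Type*) [AddCommMonoid M]
    [Module A M] : ℕ :=
  sInf {n | ∃ s : Finset M, s.card = n ∧ Submodule.span A (s : Set M) = ⊤}

/-- The minimal number of generators of an ideal. -/
noncomputable def muIdeal {A : Type*} [CommRing A] (I : Ideal A) : ℕ :=
  sInf {n | ∃ s : Finset A, s.card = n ∧ Ideal.span (s : Set A) = I}

/-- The length of a module, as the Krull dimension of its submodule lattice
(`ℕ`-valued; infinite length is sent to `0` by `toNat`, which is irrelevant in
the finite-length situations where it is used). -/
noncomputable def moduleLength (A : Type*) [CommRing A] (M : Type*) [AddCommGroup M]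
    [Module A M] : ℕ :=
  ((Order.krullDim (Submodule A M)).unbotD 0).toNat

/-- `HasHSMultiplicity A 𝔪 M s e` says that the Hilbert–Samuel multiplicity
`e⁰_𝔪(M) = lim s! · ℓ(M/𝔪^{n+1}M)/nˢ` exists and equals `e`. -/
def HasHSMultiplicity (A : Type*) [CommRing A] (𝔪 : Ideal A) (M : Type*)
    [AddCommGroup M] [Module A M] (s e : ℕ) : Prop :=
  Tendsto (fun n : ℕ =>
      (Nat.factorial s : ℝ) *
        (moduleLength A (M ⧸ ((𝔪 ^ (n + 1)) • (⊤ : Submodule A M))) : ℝ) / (n : ℝ) ^ s)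
    atTop (nhds (e : ℝ))

/-- A Cohen–Macaulay local ring: a Noetherian local ring possessing a regular
sequence of nonunits whose length is the Krull dimension. -/
def IsCohenMacaulayLocalRing (A : Type*) [CommRing A] : Prop :=
  IsLocalRing A ∧ IsNoetherianRing A ∧
    ∃ (n : ℕ) (x : Fin n → A), ringKrullDim A = n ∧ (∀ i, ¬IsUnit (x i)) ∧
      RingTheory.Sequence.IsRegular A (List.ofFn x)

/-- A Gorenstein local ring: a Noetherian local ring possessing a regular system of
parameters-length regular sequence of nonunits generating an irreducible ideal. -/
def IsGorensteinLocalRing (A : Type*) [CommRing A] : Prop :=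
  IsLocalRing A ∧ IsNoetherianRing A ∧
    ∃ (n : ℕ) (x : Fin n → A), ringKrullDim A = n ∧ (∀ i, ¬IsUnit (x i)) ∧
      RingTheory.Sequence.IsRegular A (List.ofFn x) ∧
      InfIrred (Ideal.span (Set.range x))

/-- A regular local ring: a Noetherian local ring whose maximal ideal is generated by
`dim` elements. -/
def IsRegularLocalRing' (A : Type*) [CommRing A] : Prop :=
  IsLocalRing A ∧ IsNoetherianRing A ∧
    ∃ (n : ℕ) (x : Fin n → A), ringKrullDim A = n ∧ (∀ i, ¬IsUnit (x i)) ∧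
      (∀ a : A, ¬IsUnit a → a ∈ Ideal.span (Set.range x))

universe u v

/-- A witness that `K` is a canonical module of `A`: a Gorenstein local ring `S` with
`A` a module-finite `S`-algebra of the same dimension, and `K ≅ Hom_S(A, S)` as
`A`-modules. -/
structure CanonicalModuleWitness (A : Type u) [CommRing A] (K : Type v)
    [AddCommGroup K] [Module A K] where
  S : Type u
  [ringS : CommRing S]
  [algS : Algebra S A]
  gorenstein : IsGorensteinLocalRing S
  finite : Module.Finite S A
  dimEq : ringKrullDim S = ringKrullDim A
  equiv : K ≃ₗ[A] (A →ₗ[S] S)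

/-- `K` is a canonical module of `A`. -/
def IsCanonicalModule (A : Type u) [CommRing A] (K : Type v) [AddCommGroup K]
    [Module A K] : Prop :=
  Nonempty (CanonicalModuleWitness A K)

/-- A witness to the almost Gorenstein property: an embedding `A ↪ K_A` into a
canonical module whose cokernel `C` is zero or an Ulrich module
(`μ_A(C) = e⁰_𝔪(C)`, computed with `s = d - 1`). -/
structure AGLWitness (A : Type u) [CommRing A] [IsLocalRing A] where
  K : Type u
  [addK : AddCommGroup K]
  [modK : Module A K]
  canonical : IsCanonicalModule A K
  emb : A →ₗ[A] K
  inj : Function.Injective emb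
  ulrich : Subsingleton (K ⧸ LinearMap.range emb) ∨
    ∃ d e : ℕ, ringKrullDim A = (d : ℕ) ∧
      minGens A (K ⧸ LinearMap.range emb) = e ∧
      HasHSMultiplicity A (maximalIdeal A) (K ⧸ LinearMap.range emb) (d - 1) e

/-- An almost Gorenstein local ring in the sense of Goto–Takahashi–Taniguchi. -/
def IsAlmostGorensteinLocalRing (A : Type u) [CommRing A] : Prop :=
  IsCohenMacaulayLocalRing A ∧ ∃ h : IsLocalRing A, Nonempty (@AGLWitness A _ h)

/-- A presentation of `R` as a homomorphic image of a regular local ring. -/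
structure RegularPresentation (R : Type u) [CommRing R] where
  S : Type u
  [ringS : CommRing S]
  regular : IsRegularLocalRing' S
  π : S →+* R
  surj : Function.Surjective π

/-- `R` is a homomorphic image of a regular local ring. -/
def IsQuotientOfRegularLocal (R : Type u) [CommRing R] : Prop :=
  Nonempty (RegularPresentation R)

/-- A presentation `R ≅ S/[(X) ∩ (Y)]` with `S` regular local of dimension `d + 1`,
`X, Y` part of a regular system of parameters of `S`, and `I` the image of `(X)`. -/
structure GoodPresentation (R : Type u) [CommRing R] (I : Ideal R) (d : ℕ) where
  S : Type u
  [ringS : CommRing S]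
  regular : IsRegularLocalRing' S
  dimS : ringKrullDim S = (d + 1 : ℕ)
  X : S
  Y : S
  partOfRSOP : ∃ z : Fin (d - 1) → S,
    (∀ a ∈ ({X, Y} : Set S) ∪ Set.range z, ¬IsUnit a) ∧
    (∀ a : S, ¬IsUnit a → a ∈ Ideal.span (({X, Y} : Set S) ∪ Set.range z))
  equiv : (S ⧸ (Ideal.span {X} ⊓ Ideal.span {Y})) ≃+* R
  imageI : I = Ideal.span {equiv (Ideal.Quotient.mk _ X)}

end Preamble

universe u

theorem minimal_generator_of_canonical {A : Type u} [CommRing A] [IsLocalRing A]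
    (hCM : IsCohenMacaulayLocalRing A) (hdim : ringKrullDim A = 1)
    (hnotreg : ¬IsRegularLocalRing' A)
    (K : Type u) [AddCommGroup K] [Module A K] (hK : IsCanonicalModule A K)
    (φ : A →ₗ[A] K) (hinj : Function.Injective φ)
    (hC : ∀ z ∈ maximalIdeal A, ∀ k : K, z • k ∈ LinearMap.range φ) :
    φ 1 ∉ (maximalIdeal A) • (⊤ : Submodule A K) := by
  intro hmem
  apply hnotreg
  -- the set of "good" elements
  set G : Set A := {a : A | ∃ z ∈ maximalIdeal A, ∀ w ∈ maximalIdeal A,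
    w * a ∈ Ideal.span {z}} with hG
  -- every element of 𝔪•K is φ of an element of span G
  have claim : ∀ x ∈ (maximalIdeal A) • (⊤ : Submodule A K),
      ∃ a ∈ Ideal.span G, φ a = x := by
    intro x hx
    refine Submodule.smul_induction_on hx ?_ ?_
    · intro z hz k _
      obtain ⟨a, ha⟩ := hC z hz k
      refine ⟨a, Ideal.subset_span ?_, ha⟩
      refine ⟨z, hz, fun w hw => ?_⟩
      obtain ⟨b, hb⟩ := hC w hw k
      have key : φ (w * a) = φ (z * b) := by
        have h1 : φ (w * a) = w • φ a := by
          rw [← smul_eq_mul, map_smul]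
        have h2 : φ (z * b) = z • φ b := by
          rw [← smul_eq_mul, map_smul]
        rw [h1, h2, ha, hb, smul_smul, smul_smul, mul_comm]
      have := hinj key
      rw [this]
      exact Ideal.mem_span_singleton.mpr ⟨b, rfl⟩
    · rintro x y ⟨a, haG, ha⟩ ⟨b, hbG, hb⟩
      exact ⟨a + b, add_mem haG hbG, by rw [map_add, ha, hb]⟩
  obtain ⟨a, haG, ha⟩ := claim _ hmem
  have h1 : (1 : A) ∈ Ideal.span G := by rwa [← hinj ha]
  -- some element of G is a unit
  have hGnot : ¬ G ⊆ (maximalIdeal A : Set A) := by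
    intro hsub
    have : Ideal.span G ≤ maximalIdeal A := Ideal.span_le.mpr hsub
    exact (IsLocalRing.maximalIdeal.isMaximal A).ne_top
      (Ideal.eq_top_of_isUnit_mem _ (this h1) isUnit_one)
  obtain ⟨g, hgG, hgm⟩ := Set.not_subset.mp hGnot
  have hgu : IsUnit g := by
    by_contra h
    exact hgm (IsLocalRing.mem_maximalIdeal g |>.mpr h)
  obtain ⟨z, hz, hzprop⟩ := hgG
  -- 𝔪 ⊆ (z)
  have hmz : ∀ w ∈ maximalIdeal A, w ∈ Ideal.span {z} := by
    intro w hw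
    obtain ⟨u, hu⟩ := hgu.exists_right_inv
    obtain ⟨c, hc⟩ := Ideal.mem_span_singleton.mp (hzprop w hw)
    refine Ideal.mem_span_singleton.mpr ⟨c * u, ?_⟩
    calc w = w * (g * u) := by rw [hu, mul_one]
    _ = (w * g) * u := by ring
    _ = z * (c * u) := by rw [hc]; ring
  refine ⟨inferInstance, hCM.2.1, 1, ![z], ?_, ?_, ?_⟩
  · rw [hdim]; norm_num
  · intro i
    fin_cases i
    simpa using (IsLocalRing.mem_maximalIdeal z).mp hz
  · intro b hb
    have hr : Set.range ![z] = {z} := by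
      ext x; simp [Matrix.range_cons]
    rw [hr]
    exact hmz b ((IsLocalRing.mem_maximalIdeal b).mpr hb)
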